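/- arXiv:2406.17379 — 2 statements merged into one kernel-verified Lean document; each statement's English description precedes it below -/
import Mathlib

section
/- An STN is consistent (admits an assignment T : V → ℝ satisfying all edge constraints T_Y − T_X ≤ d_{XY}) if and only if its distance graph contains no directed cycle of negative total weight. -/
open Finset

open Classical in
/-- Bellman-Ford iteration: `gfun E d k y` is the minimum weight of a walk of
length at most `k` ending at `y` (starting anywhere, with initial value 0). -/
noncomputable def gfun {V : Type*} [Fintype V] [Nonempty V]
    (E : V → V → Prop) (d : V → V → ℝ) : ℕ → V → ℝ
  | 0 => fun _ => 0
  | (k+1) => fun y => Finset.univ.inf' Finset.univ_nonempty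
      (fun x => if E x y then min (gfun E d k y) (gfun E d k x + d x y) else gfun E d k y)

section aux

variable {V : Type*} [Fintype V] [Nonempty V] (E : V → V → Prop) (d : V → V → ℝ)

lemma gfun_succ_le (k : ℕ) (y : V) : gfun E d (k+1) y ≤ gfun E d k y := by
  classical
  refine le_trans (Finset.inf'_le _ (Finset.mem_univ (Classical.arbitrary V))) ?_
  split_ifs
  · exact min_le_left _ _
  · exact le_refl _

lemma gfun_anti {k l : ℕ} (h : k ≤ l) (y : V) : gfun E d l y ≤ gfun E d k y := by
  induction l with
  | zero => simp [Nat.le_zero.mp h]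
  | succ l ih =>
    rcases Nat.lt_or_ge k (l+1) with h' | h'
    · exact le_trans (gfun_succ_le E d l y) (ih (Nat.lt_succ_iff.mp h'))
    · have : k = l + 1 := le_antisymm h h'
      simp [this]

lemma gfun_edge {x y : V} (k : ℕ) (h : E x y) :
    gfun E d (k+1) y ≤ gfun E d k x + d x y := by
  classical
  refine le_trans (Finset.inf'_le _ (Finset.mem_univ x)) ?_
  rw [if_pos h]
  exact min_le_right _ _

/-- Upper bound: any walk of length `m` ending at `p m` bounds `gfun E d m`. -/
lemma gfun_le_walk (m : ℕ) (p : ℕ → V) (hE : ∀ i < m, E (p i) (p (i+1))) :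
    gfun E d m (p m) ≤ ∑ i ∈ Finset.range m, d (p i) (p (i+1)) := by
  induction m with
  | zero => simp [gfun]
  | succ m ih =>
    rw [Finset.sum_range_succ]
    have h1 : gfun E d (m+1) (p (m+1)) ≤ gfun E d m (p m) + d (p m) (p (m+1)) :=
      gfun_edge E d m (hE m (Nat.lt_succ_self m))
    have h2 := ih (fun i hi => hE i (Nat.lt_succ_of_lt hi))
    linarith

/-- Witness: `gfun E d k y` is achieved by some walk of length `m ≤ k` ending at `y`. -/
lemma gfun_exists_walk (k : ℕ) (y : V) :
    ∃ m ≤ k, ∃ p : ℕ → V, (∀ i < m, E (p i) (p (i+1))) ∧ p m = y ∧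
      (∑ i ∈ Finset.range m, d (p i) (p (i+1))) = gfun E d k y := by
  classical
  induction k generalizing y with
  | zero =>
    exact ⟨0, le_refl _, fun _ => y, by omega, rfl, by simp [gfun]⟩
  | succ k ih =>
    obtain ⟨x, -, hx⟩ := Finset.exists_mem_eq_inf' (Finset.univ_nonempty)
      (fun x => if E x y then min (gfun E d k y) (gfun E d k x + d x y) else gfun E d k y)
    have hx' : gfun E d (k+1) y
        = if E x y then min (gfun E d k y) (gfun E d k x + d x y) else gfun E d k y := by
      rw [gfun]; exact hx
    by_cases hxy : E x y
    · rw [if_pos hxy] at hx'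
      rcases min_cases (gfun E d k y) (gfun E d k x + d x y) with ⟨hmin, -⟩ | ⟨hmin, -⟩
      · -- value is gfun k y
        obtain ⟨m, hm, p, hpE, hpend, hpsum⟩ := ih y
        exact ⟨m, le_trans hm (Nat.le_succ k), p, hpE, hpend, by rw [hpsum, hx', hmin]⟩
      · -- value is gfun k x + d x y
        obtain ⟨m, hm, p, hpE, hpend, hpsum⟩ := ih x
        refine ⟨m+1, Nat.succ_le_succ hm, fun t => if t ≤ m then p t else y, ?_, ?_, ?_⟩
        · intro i hi
          rcases Nat.lt_or_ge i m with hi' | hi'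
          · simpa [Nat.le_of_lt hi', Nat.succ_le_of_lt hi'] using hpE i hi'
          · have : i = m := by omega
            subst this
            simpa [hpend] using hxy
        · simp
        · rw [Finset.sum_range_succ]
          have : ∀ i ∈ Finset.range m,
              d (if i ≤ m then p i else y) (if i+1 ≤ m then p (i+1) else y)
              = d (p i) (p (i+1)) := by
            intro i hi
            have hi' := Finset.mem_range.mp hi
            simp [Nat.le_of_lt hi', Nat.succ_le_of_lt hi']
          rw [Finset.sum_congr rfl this, hpsum, hx', hmin]
          simp [hpend]
    · rw [if_neg hxy] at hx'
      obtain ⟨m, hm, p, hpE, hpend, hpsum⟩ := ih y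
      exact ⟨m, le_trans hm (Nat.le_succ k), p, hpE, hpend, by rw [hpsum, hx']⟩

end aux

/-- An STN (a finite directed edge-weighted graph over node set V,
where edge (X,Y) with weight d_{XY} imposes T_Y − T_X ≤ d_{XY}) is consistent
(admits an assignment T : V → ℝ satisfying all edge constraints) if and only if
its distance graph contains no directed cycle of negative total weight. -/
theorem stmt6 {V : Type*} [Fintype V] (E : V → V → Prop) (d : V → V → ℝ) :
    (∃ T : V → ℝ, ∀ x y : V, E x y → T y - T x ≤ d x y) ↔
      ¬ ∃ (m : ℕ) (p : ℕ → V), 0 < m ∧ p m = p 0 ∧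
          (∀ i < m, E (p i) (p (i + 1))) ∧
          (∑ i ∈ Finset.range m, d (p i) (p (i + 1))) < 0 := by
  classical
  constructor
  · rintro ⟨T, hT⟩ ⟨m, p, hm, hcyc, hE, hsum⟩
    have h2 : ∑ i ∈ Finset.range m, (T (p (i+1)) - T (p i))
        ≤ ∑ i ∈ Finset.range m, d (p i) (p (i+1)) :=
      Finset.sum_le_sum (fun i hi => hT _ _ (hE i (Finset.mem_range.mp hi)))
    rw [Finset.sum_range_sub (fun i => T (p i)), hcyc] at h2
    linarith
  · intro hnc
    by_cases hV : Nonempty V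
    swap
    · exact ⟨fun _ => 0, fun x _ _ => absurd ⟨x⟩ hV⟩
    set n := Fintype.card V with hn
    -- Main claim: any walk (of any length) ending at y has weight at least gfun n y.
    have main : ∀ m : ℕ, ∀ p : ℕ → V, (∀ i < m, E (p i) (p (i+1))) →
        gfun E d n (p m) ≤ ∑ i ∈ Finset.range m, d (p i) (p (i+1)) := by
      intro m
      induction m using Nat.strong_induction_on with
      | _ m IH =>
        intro p hpE
        rcases le_or_gt m n with hm | hm
        · exact le_trans (gfun_anti E d hm (p m)) (gfun_le_walk E d m p hpE)
        · -- pigeonhole: p has a repeated vertex among indices 0..n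
          obtain ⟨a, b, hab, heq⟩ :=
            Fintype.exists_ne_map_eq_of_card_lt (fun t : Fin (n+1) => p t.val)
              (by simp [hn])
          -- wlog a < b
          wlog hlt : (a : ℕ) < (b : ℕ) generalizing a b
          · have hne : (a:ℕ) ≠ (b:ℕ) := fun h => hab (Fin.ext h)
            exact this b a hab.symm heq.symm (by omega)
          set i := (a : ℕ)
          set c := (b : ℕ) - i with hc
          have hcpos : 0 < c := by omega
          have hic : i + c ≤ n := by have := b.isLt; omega
          have hpp : p i = p (i + c) := by
            have : (b : ℕ) = i + c := by omega
            rw [← this]; exact heq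
          set e := m - (i + c) with he
          have hme : m = i + c + e := by omega
          -- the cycle from i to i+c has nonnegative weight
          have hcyc_nonneg : 0 ≤ ∑ s ∈ Finset.range c, d (p (i+s)) (p (i+s+1)) := by
            by_contra hneg
            push_neg at hneg
            refine hnc ⟨c, fun s => p (i+s), hcpos, ?_, ?_, ?_⟩
            · simpa using hpp.symm
            · intro s hs
              have : i + s < m := by omega
              simpa [Nat.add_assoc] using hpE (i+s) this
            · simpa [Nat.add_assoc] using hneg
          -- the shortened walk
          set q : ℕ → V := fun t => if t < i then p t else p (t + c) with hq
          have hq_end : q (i + e) = p m := by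
            have h1 : ¬ (i + e < i) := by omega
            simp only [hq, if_neg h1]
            congr 1
            omega
          have hqE : ∀ t < i + e, E (q t) (q (t+1)) := by
            intro t ht
            rcases Nat.lt_or_ge (t+1) i with h1 | h1
            · have h0 : t < i := by omega
              simpa [hq, h0, h1] using hpE t (by omega)
            · rcases Nat.lt_or_ge t i with h0 | h0
              · -- t + 1 = i
                have hti : t + 1 = i := by omega
                have : q (t+1) = p (t+1) := by
                  simp only [hq, if_neg (by omega : ¬ t + 1 < i)]
                  rw [hti, ← hpp, ← hti]
                rw [this]
                simp only [hq, if_pos h0]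
                exact hpE t (by omega)
              · simp only [hq, if_neg (by omega : ¬ t < i),
                  if_neg (by omega : ¬ t + 1 < i)]
                have : t + 1 + c = t + c + 1 := by omega
                rw [this]
                exact hpE (t + c) (by omega)
          have hsum_q : ∑ t ∈ Finset.range (i + e), d (q t) (q (t+1))
              = (∑ t ∈ Finset.range i, d (p t) (p (t+1)))
                + ∑ t ∈ Finset.range e, d (p (i+c+t)) (p (i+c+t+1)) := by
            rw [Finset.sum_range_add]
            congr 1
            · refine Finset.sum_congr rfl ?_
              intro t ht
              have ht' := Finset.mem_range.mp ht
              rcases Nat.lt_or_ge (t+1) i with h1 | h1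
              · simp [hq, ht', h1]
              · have hti : t + 1 = i := by omega
                have h2 : q (t+1) = p (t+1) := by
                  simp only [hq, if_neg (by omega : ¬ t + 1 < i)]
                  rw [hti, ← hpp, ← hti]
                have h3 : q t = p t := by simp [hq, ht']
                rw [h3, h2]
            · refine Finset.sum_congr rfl ?_
              intro t ht
              simp only [hq, if_neg (by omega : ¬ i + t < i),
                if_neg (by omega : ¬ i + t + 1 < i)]
              congr 2 <;> omega
          have hsum_p : ∑ t ∈ Finset.range m, d (p t) (p (t+1))
              = (∑ t ∈ Finset.range i, d (p t) (p (t+1)))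
                + (∑ s ∈ Finset.range c, d (p (i+s)) (p (i+s+1)))
                + ∑ t ∈ Finset.range e, d (p (i+c+t)) (p (i+c+t+1)) := by
            rw [hme, Finset.sum_range_add, Finset.sum_range_add]
          have hIH := IH (i + e) (by omega) q hqE
          rw [hq_end] at hIH
          rw [hsum_p]
          rw [hsum_q] at hIH
          linarith
    -- conclude
    refine ⟨gfun E d n, ?_⟩
    intro x y hxy
    rw [sub_le_iff_le_add, add_comm]
    obtain ⟨m, hm, p, hpE, hpend, hpsum⟩ := gfun_exists_walk E d n x
    set q : ℕ → V := fun t => if t ≤ m then p t else y with hq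
    have hqE : ∀ t < m + 1, E (q t) (q (t+1)) := by
      intro t ht
      rcases Nat.lt_or_ge t m with h1 | h1
      · simpa [hq, Nat.le_of_lt h1, Nat.succ_le_of_lt h1] using hpE t h1
      · have : t = m := by omega
        subst this
        simpa [hq, hpend] using hxy
    have := main (m+1) q hqE
    have hq_end : q (m+1) = y := by simp [hq]
    rw [hq_end] at this
    refine le_trans this ?_
    rw [Finset.sum_range_succ]
    have hcg : ∀ t ∈ Finset.range m, d (q t) (q (t+1)) = d (p t) (p (t+1)) := by
      intro t ht
      have ht' := Finset.mem_range.mp ht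
      simp [hq, Nat.le_of_lt ht', Nat.succ_le_of_lt ht']
    rw [Finset.sum_congr rfl hcg, hpsum]
    simp [hq, hpend]
end

section
/- For a consistent STN with all-pairs shortest-path matrix D, an assignment T satisfies all original edge constraints if and only if it satisfies T_y − T_x ≤ D(x,y) for all node pairs (x,y) with D(x,y) < ∞; i.e., the minimal (tightest) implied bound between any two time points is the shortest-path distance. -/
/-- The set of total weights (in the extended reals) of directed paths from `x`
to `y` in the edge-weighted graph `(E, d)`; the empty path, of weight 0, counts
when `x = y`. -/
def pathWeightsE {V : Type*} (E : V → V → Prop) (d : V → V → ℝ) (x y : V) :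
    Set EReal :=
  {w | ∃ (m : ℕ) (p : ℕ → V), p 0 = x ∧ p m = y ∧
        (∀ i < m, E (p i) (p (i + 1))) ∧
        w = ∑ i ∈ Finset.range m, ((d (p i) (p (i + 1)) : ℝ) : EReal)}

/-- The all-pairs shortest-path matrix: `D x y` is the shortest directed path
weight from `x` to `y`, `+∞` if no path exists. -/
noncomputable def apspDist {V : Type*} (E : V → V → Prop) (d : V → V → ℝ)
    (x y : V) : EReal :=
  sInf (pathWeightsE E d x y)

lemma erealCoeSum {α : Type*} (s : Finset α) (f : α → ℝ) :
    ((∑ i ∈ s, f i : ℝ) : EReal) = ∑ i ∈ s, ((f i : ℝ) : EReal) := by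
  induction s using Finset.cons_induction with
  | empty => simp
  | cons a s ha ih => rw [Finset.sum_cons, Finset.sum_cons, EReal.coe_add, ih]

/-- For a consistent STN (no negative directed cycle) with
all-pairs shortest-path matrix D, an assignment T satisfies all original edge
constraints T_y − T_x ≤ d_{xy} if and only if it satisfies T_y − T_x ≤ D(x,y)
for all node pairs (x,y) with D(x,y) < ∞; i.e., the minimal (tightest) implied
bound between any two time points is the shortest-path distance. -/
theorem stmt13 {V : Type*} [Fintype V] (E : V → V → Prop) (d : V → V → ℝ)
    (hconsistent : ¬ ∃ (m : ℕ) (p : ℕ → V), 0 < m ∧ p m = p 0 ∧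
        (∀ i < m, E (p i) (p (i + 1))) ∧
        (∑ i ∈ Finset.range m, d (p i) (p (i + 1))) < 0)
    (T : V → ℝ) :
    (∀ x y : V, E x y → T y - T x ≤ d x y) ↔
      (∀ x y : V, apspDist E d x y < ⊤ →
        ((T y - T x : ℝ) : EReal) ≤ apspDist E d x y) := by
  constructor
  · intro h x y _
    apply le_sInf
    rintro w ⟨m, p, h0, hm, he, rfl⟩
    rw [← erealCoeSum]
    rw [EReal.coe_le_coe_iff]
    have htel : T y - T x = ∑ i ∈ Finset.range m, (T (p (i+1)) - T (p i)) := by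
      rw [Finset.sum_range_sub (fun i => T (p i)), h0, hm]
    rw [htel]
    exact Finset.sum_le_sum fun i hi => h _ _ (he i (Finset.mem_range.mp hi))
  · intro h x y hxy
    have hmem : ((d x y : ℝ) : EReal) ∈ pathWeightsE E d x y := by
      refine ⟨1, fun i => if i = 0 then x else y, by simp, by simp, ?_, by simp⟩
      intro i hi
      interval_cases i
      simpa using hxy
    have hle : apspDist E d x y ≤ ((d x y : ℝ) : EReal) := sInf_le hmem
    have hlt : apspDist E d x y < ⊤ := lt_of_le_of_lt hle (EReal.coe_lt_top _)
    exact EReal.coe_le_coe_iff.mp ((h x y hlt).trans hle)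
end
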